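/- (Asymmetric testing, necessity.) Let H_0, H_1 be measurable subsets of the set E of stationary ergodic process distributions over a finite alphabet A. If there exists an asymmetrically consistent test for H_0 against H_1, then W_ρ(H_1) = 0 for every ρ ∈ cl(H_0). -/

import Mathlib

open MeasureTheory Filter Topology

namespace Paper

variable {A : Type*} [Fintype A] [MeasurableSpace A]

/-- The left shift on one-sided infinite sequences. -/
def shift (x : ℕ → A) : ℕ → A := fun n => x (n + 1)

/-- A process distribution is stationary if it is invariant under the left shift. -/
def Stationary (ρ : Measure (ℕ → A)) : Prop := Measure.map shift ρ = ρ

/-- The cylinder set of sequences starting with the word `B ∈ A^k`. -/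
def wordCyl {k : ℕ} (B : Fin k → A) : Set (ℕ → A) := {x | ∀ i : Fin k, x i = B i}

open Classical in
/-- Empirical frequency `ν(X_{1..n}, B)` of the word `B ∈ A^k` in the first `n` symbols
of `x` (0 when `n < k`). -/
noncomputable def freqWord {k : ℕ} (B : Fin k → A) (n : ℕ) (x : ℕ → A) : ℝ :=
  if k ≤ n then
    (∑ i ∈ Finset.range (n - k + 1), if (∀ j : Fin k, x (i + j) = B j) then (1 : ℝ) else 0) /
      ((n : ℝ) - k + 1)
  else 0

/-- Ergodicity: the empirical frequency of every finite word converges a.s. to a constant. -/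
def ErgodicProc (ρ : Measure (ℕ → A)) : Prop :=
  ∀ (k : ℕ) (B : Fin k → A),
    ∃ c : ℝ, ∀ᵐ x ∂ρ, Tendsto (fun n => freqWord B n x) atTop (𝓝 c)

/-- A stationary ergodic process distribution. -/
def StatErg (ρ : Measure (ℕ → A)) : Prop :=
  IsProbabilityMeasure ρ ∧ Stationary ρ ∧ ErgodicProc ρ

/-- The set `E` of stationary ergodic process distributions over the alphabet `A`. -/
def ergSet (A : Type*) [Fintype A] [MeasurableSpace A] : Set (Measure (ℕ → A)) :=
  {ρ | StatErg ρ}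

/-- Weights `w_k = 1/(k(k+1))` (indexing from 0: `w_k = 1/((k+1)(k+2))`). -/
noncomputable def wt (k : ℕ) : ℝ := 1 / ((k + 1) * (k + 2))

/-- The distributional distance `d(ρ₁,ρ₂) = Σ_k w_k Σ_{B ∈ A^k} |ρ₁(B) − ρ₂(B)|`. -/
noncomputable def dd (ρ₁ ρ₂ : Measure (ℕ → A)) : ℝ :=
  ∑' k : ℕ, wt k * ∑ B : Fin (k + 1) → A,
    |(ρ₁ (wordCyl B)).toReal - (ρ₂ (wordCyl B)).toReal|

/-- The empirical distributional distance `d̂(X_{1..n}, ρ)`. -/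
noncomputable def hatd (n : ℕ) (x : ℕ → A) (ρ : Measure (ℕ → A)) : ℝ :=
  ∑' k : ℕ, wt k * ∑ B : Fin (k + 1) → A,
    |freqWord B n x - (ρ (wordCyl B)).toReal|

/-- The empirical distributional distance from a sample to a hypothesis (set of
process distributions): `d̂(X_{1..n}, H) = inf_{ρ ∈ H} d̂(X_{1..n}, ρ)`. -/
noncomputable def hatdSet (n : ℕ) (x : ℕ → A) (H : Set (Measure (ℕ → A))) : ℝ :=
  ⨅ ρ : H, hatd n x (ρ : Measure (ℕ → A))

/-- Closure of a set of (stationary) process distributions in the topology of the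
distributional distance, taken within the space `S` of stationary process distributions. -/
def closureD (H : Set (Measure (ℕ → A))) : Set (Measure (ℕ → A)) :=
  {ρ | IsProbabilityMeasure ρ ∧ Stationary ρ ∧ ∀ ε : ℝ, 0 < ε → ∃ μ ∈ H, dd ρ μ < ε}

/-- `W` is the ergodic decomposition of the stationary process distribution `ρ`:
a Borel probability measure on the space of process distributions concentrated on the
stationary ergodic ones, with `ρ(s) = ∫ μ(s) dW(μ)` for every measurable `s`. -/
def IsErgodicDecomp (ρ : Measure (ℕ → A)) (W : Measure (Measure (ℕ → A))) : Prop :=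
  IsProbabilityMeasure W ∧ W (ergSet A) = 1 ∧
    ∀ s : Set (ℕ → A), MeasurableSet s → ρ s = ∫⁻ μ, μ s ∂W

/-- A test depends, at sample size `n`, only on the first `n` symbols. -/
def FinHorizon (φ : ℕ → (ℕ → A) → Bool) : Prop :=
  ∀ n x y, (∀ i < n, x i = y i) → φ n x = φ n y

/-- Uniform consistency of a test (`false` = accept `H₀`, `true` = accept `H₁`):
for every `α > 0`, for all large enough sample sizes, both probabilities of error are
less than `α`. -/
def UnifConsistent (φ : ℕ → (ℕ → A) → Bool) (H₀ H₁ : Set (Measure (ℕ → A))) : Prop :=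
  ∀ α : ℝ, 0 < α → ∃ N : ℕ, ∀ n ≥ N,
    (∀ ρ ∈ H₀, ρ {x | φ n x = true} < ENNReal.ofReal α) ∧
    (∀ ρ ∈ H₁, ρ {x | φ n x = false} < ENNReal.ofReal α)

/-- Asymmetric (`α`-level) consistency of a family of tests `ψ α`: Type I error is always
at most `α`, and under every distribution in `H₁`, a.s. the test outputs `1` from some
sample size on. -/
def AsymConsistent (ψ : ℝ → ℕ → (ℕ → A) → Bool) (H₀ H₁ : Set (Measure (ℕ → A))) : Prop :=
  (∀ α : ℝ, α ∈ Set.Ioo (0 : ℝ) 1 → ∀ n : ℕ, ∀ ρ ∈ H₀,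
    ρ {x | ψ α n x = true} ≤ ENNReal.ofReal α) ∧
  (∀ α : ℝ, α ∈ Set.Ioo (0 : ℝ) 1 → ∀ ρ ∈ H₁,
    ∀ᵐ x ∂ρ, ∀ᶠ n in atTop, ψ α n x = true)

/-- The measurable atom of a point in a finite measurable space. -/
def atomA (a : A) : Set A := ⋂₀ {t : Set A | MeasurableSet t ∧ a ∈ t}

lemma measurableSet_atomA (a : A) : MeasurableSet (atomA a) := by
  apply MeasurableSet.sInter
  · exact (Set.toFinite _).countable
  · exact fun t ht => ht.1

lemma mem_atomA_self (a : A) : a ∈ atomA a := fun t ht => ht.2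

lemma mem_of_mem_atomA {a b : A} (hb : b ∈ atomA a) {t : Set A}
    (ht : MeasurableSet t) : b ∈ t ↔ a ∈ t := by
  constructor
  · intro hbt
    by_contra hat
    exact (hb tᶜ ⟨ht.compl, hat⟩) hbt
  · intro hat
    exact hb t ⟨ht, hat⟩

lemma atomA_eq_of_mem {a b : A} (hb : b ∈ atomA a) : atomA b = atomA a := by
  have : {t : Set A | MeasurableSet t ∧ b ∈ t} = {t : Set A | MeasurableSet t ∧ a ∈ t} := by
    ext t
    simp only [Set.mem_setOf_eq, and_congr_right_iff]
    intro ht; exact mem_of_mem_atomA hb ht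
  unfold atomA; rw [this]

lemma mem_iff_of_indist {x y : ℕ → A}
    (h : ∀ (i : ℕ) (t : Set A), MeasurableSet t → (x i ∈ t ↔ y i ∈ t))
    {S : Set (ℕ → A)} (hS : MeasurableSet S) : x ∈ S ↔ y ∈ S := by
  have hS' : MeasurableSpace.GenerateMeasurable
      {s : Set (ℕ → A) | ∃ i, MeasurableSet[MeasurableSpace.comap (fun f => f i) ‹MeasurableSpace A›] s} S :=
    (MeasurableSpace.measurableSet_iSup
      (m := fun i : ℕ => MeasurableSpace.comap (fun f : ℕ → A => f i) ‹MeasurableSpace A›)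
      (s := S)).mp hS
  clear hS
  induction hS' with
  | basic u hu =>
      obtain ⟨i, hi⟩ := hu
      obtain ⟨t, ht, rfl⟩ := hi
      exact h i t ht
  | empty => simp
  | compl u _ ih => simp only [Set.mem_compl_iff]; exact not_congr ih
  | iUnion f _ ih => simp only [Set.mem_iUnion]; exact exists_congr ih

/-- The set of letters whose measurable atom is not a singleton. -/
def bigA (A : Type*) [Fintype A] [MeasurableSpace A] : Set A := {a : A | ¬ atomA a ⊆ {a}}

lemma measurableSet_bigA : MeasurableSet (bigA A) := by
  have : bigA A = ⋃ (a : A) (_ : ¬ atomA a ⊆ {a}), atomA a := by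
    ext u
    simp only [Set.mem_iUnion]
    constructor
    · intro hu; exact ⟨u, hu, mem_atomA_self u⟩
    · rintro ⟨a, ha, hu⟩
      intro hsub
      obtain ⟨b, hb, hbne⟩ : ∃ b ∈ atomA a, b ≠ a := by
        by_contra hcon
        push_neg at hcon
        exact ha (fun z hz => hcon z hz)
      have hab : atomA u = atomA a := atomA_eq_of_mem hu
      have hbu : b ∈ atomA u := hab ▸ hb
      have hau : a ∈ atomA u := hab ▸ mem_atomA_self a
      have h1 : b = u := hsub hbu
      have h2 : a = u := hsub hau
      exact hbne (h1.trans h2.symm)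
  rw [this]
  exact MeasurableSet.iUnion fun a => MeasurableSet.iUnion fun _ => measurableSet_atomA a

open Classical in
/-- Unfolding of `freqWord` for single-letter words, `n ≥ 1`. -/
lemma freqWord_single (a : A) {n : ℕ} (hn : 1 ≤ n) (x : ℕ → A) :
    freqWord (fun _ : Fin 1 => a) n x
      = (∑ i ∈ Finset.range n, if x i = a then (1 : ℝ) else 0) / (n : ℝ) := by
  classical
  unfold freqWord
  rw [if_pos hn]
  have h1 : n - 1 + 1 = n := Nat.sub_add_cancel hn
  rw [h1]
  push_cast
  have h2 : ((n : ℝ) - 1 + 1) = (n : ℝ) := by ring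
  rw [h2]
  congr 1
  apply Finset.sum_congr rfl
  intro i _
  congr 1
  simp [Fin.forall_fin_one]

open Classical in
lemma freq_merge {a b : A} (hne : b ≠ a) {n : ℕ} (hn : 1 ≤ n) (x : ℕ → A) :
    freqWord (fun _ : Fin 1 => b) n (fun i => if x i = a then b else x i)
      = freqWord (fun _ : Fin 1 => b) n x + freqWord (fun _ : Fin 1 => a) n x := by
  classical
  rw [freqWord_single b hn, freqWord_single b hn, freqWord_single a hn, ← add_div]
  congr 1
  rw [← Finset.sum_add_distrib]
  apply Finset.sum_congr rfl
  intro i _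
  by_cases h1 : x i = a <;> by_cases h2 : x i = b <;>
    simp [h1, h2, hne, hne.symm]

/-- Letters with a non-trivial measurable atom have a.s. vanishing frequency. -/
lemma letter_freq_zero (μ : Measure (ℕ → A)) [IsProbabilityMeasure μ]
    (hErg : ErgodicProc μ) {a : A} (ha : a ∈ bigA A) :
    ∀ᵐ x ∂μ, Tendsto (fun n => freqWord (fun _ : Fin 1 => a) n x) atTop (𝓝 0) := by
  classical
  obtain ⟨b, hb, hbne⟩ : ∃ b ∈ atomA a, b ≠ a := by
    by_contra hcon
    push_neg at hcon
    exact ha (fun z hz => hcon z hz)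
  obtain ⟨ca, hca⟩ := hErg 1 (fun _ => a)
  obtain ⟨cb, hcb⟩ := hErg 1 (fun _ => b)
  suffices hca0 : ca = 0 by
    rw [← hca0]; exact hca
  have h0 : μ {x : ℕ → A | ¬ (Tendsto (fun n => freqWord (fun _ : Fin 1 => a) n x) atTop (𝓝 ca)
      ∧ Tendsto (fun n => freqWord (fun _ : Fin 1 => b) n x) atTop (𝓝 cb))} = 0 := by
    have := hca.and hcb
    rw [MeasureTheory.ae_iff] at this
    exact this
  obtain ⟨N, hNs, hNm, hN0⟩ := exists_measurable_superset_of_null h0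
  have hS1 : μ Nᶜ = 1 := by
    rw [measure_compl hNm (measure_ne_top μ N), hN0, measure_univ, tsub_zero]
  have hSx : ∀ x ∈ Nᶜ, Tendsto (fun n => freqWord (fun _ : Fin 1 => a) n x) atTop (𝓝 ca)
      ∧ Tendsto (fun n => freqWord (fun _ : Fin 1 => b) n x) atTop (𝓝 cb) := by
    intro x hx
    by_contra hcon
    exact hx (hNs hcon)
  obtain ⟨x, hx⟩ : (Nᶜ : Set (ℕ → A)).Nonempty := by
    rw [Set.nonempty_iff_ne_empty]
    intro hemp
    rw [hemp, measure_empty] at hS1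
    exact zero_ne_one hS1
  set M : (ℕ → A) → (ℕ → A) := fun y i => if y i = a then b else y i with hM
  have hMx : M x ∈ Nᶜ := by
    have hrel : ∀ (i : ℕ) (t : Set A), MeasurableSet t → (x i ∈ t ↔ (M x) i ∈ t) := by
      intro i t ht
      by_cases hia : x i = a
      · have : (M x) i = b := by simp [hM, hia]
        rw [this, hia]
        exact (mem_of_mem_atomA hb ht).symm
      · have : (M x) i = x i := by simp [hM, hia]
        rw [this]
    exact (mem_iff_of_indist hrel hNm.compl).mp hx
  have h1 : Tendsto (fun n => freqWord (fun _ : Fin 1 => b) n (M x)) atTop (𝓝 cb) :=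
    (hSx (M x) hMx).2
  have h2 : Tendsto (fun n => freqWord (fun _ : Fin 1 => b) n (M x)) atTop (𝓝 (cb + ca)) := by
    apply Tendsto.congr' _ (((hSx x hx).2).add ((hSx x hx).1))
    filter_upwards [eventually_ge_atTop 1] with n hn
    exact (freq_merge hbne hn x).symm
  have := tendsto_nhds_unique h1 h2
  linarith

lemma measurable_shift : Measurable (shift : (ℕ → A) → (ℕ → A)) :=
  measurable_pi_lambda _ (fun n => measurable_pi_apply (n + 1))

lemma shift_iterate_apply (i : ℕ) (x : ℕ → A) (n : ℕ) : (shift^[i]) x n = x (n + i) := by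
  induction i generalizing x with
  | zero => rfl
  | succ i ih =>
      rw [Function.iterate_succ_apply]
      rw [ih (shift x)]
      simp [shift]
      ring_nf

lemma map_shift_iterate (μ : Measure (ℕ → A)) (hstat : Stationary μ) (i : ℕ) :
    Measure.map (shift^[i]) μ = μ := by
  induction i with
  | zero => simp [Measure.map_id]
  | succ i ih =>
      rw [Function.iterate_succ']
      rw [← Measure.map_map measurable_shift (measurable_shift.iterate i), ih, hstat]


lemma coord_bigA_measure (μ : Measure (ℕ → A)) (hstat : Stationary μ) (i : ℕ) :
    μ {x : ℕ → A | x i ∈ bigA A} = μ {x : ℕ → A | x 0 ∈ bigA A} := by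
  have hpre : {x : ℕ → A | x i ∈ bigA A} = (shift^[i]) ⁻¹' {x : ℕ → A | x 0 ∈ bigA A} := by
    ext x
    simp only [Set.mem_preimage, Set.mem_setOf_eq, shift_iterate_apply, Nat.zero_add]
  have hm : MeasurableSet {x : ℕ → A | x 0 ∈ bigA A} :=
    (measurable_pi_apply 0) measurableSet_bigA
  rw [hpre, ← Measure.map_apply (measurable_shift.iterate i) hm, map_shift_iterate μ hstat i]

open Classical in
/-- Under a stationary ergodic process, letters with non-trivial atoms are null. -/
lemma bigA_null (μ : Measure (ℕ → A)) [IsProbabilityMeasure μ]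
    (hstat : Stationary μ) (hErg : ErgodicProc μ) :
    μ {x : ℕ → A | x 0 ∈ bigA A} = 0 := by
  classical
  set E0 : Set (ℕ → A) := {x : ℕ → A | x 0 ∈ bigA A} with hE0
  have hE0m : MeasurableSet E0 := (measurable_pi_apply 0) measurableSet_bigA
  set p : ℝ := (μ E0).toReal with hp
  suffices hp0 : p = 0 by
    have := (ENNReal.toReal_eq_zero_iff _).mp hp0
    rcases this with h | h
    · exact h
    · exact absurd h (measure_ne_top μ E0)
  -- the dominated functions
  set F : ℕ → (ℕ → A) → ℝ :=
    fun n x => (∑ i ∈ Finset.range n, if x i ∈ bigA A then (1 : ℝ) else 0) / (n : ℝ) with hF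
  have hFm : ∀ n, Measurable (F n) := by
    intro n
    apply Measurable.div_const
    apply Finset.measurable_sum
    intro i _
    exact Measurable.ite ((measurable_pi_apply i) measurableSet_bigA)
      measurable_const measurable_const
  -- pointwise identity with letter frequencies
  set big : Finset A := Finset.univ.filter (fun a => a ∈ bigA A) with hbig
  have hid : ∀ x : ℕ → A, ∀ n, 1 ≤ n →
      F n x = ∑ a ∈ big, freqWord (fun _ : Fin 1 => a) n x := by
    intro x n hn
    simp only [hF]
    have : ∀ a ∈ big, freqWord (fun _ : Fin 1 => a) n x
        = (∑ i ∈ Finset.range n, if x i = a then (1 : ℝ) else 0) / (n : ℝ) :=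
      fun a _ => freqWord_single a hn x
    rw [Finset.sum_congr rfl this, ← Finset.sum_div]
    congr 1
    rw [Finset.sum_comm]
    apply Finset.sum_congr rfl
    intro i _
    rw [Finset.sum_ite_eq big (x i) (fun _ => (1:ℝ))]
    by_cases h : x i ∈ bigA A <;> simp [hbig, h]
  -- a.e. convergence to 0
  have hae : ∀ᵐ x ∂μ, Tendsto (fun n => F n x) atTop (𝓝 0) := by
    have hall : ∀ᵐ x ∂μ, ∀ a : A, a ∈ bigA A →
        Tendsto (fun n => freqWord (fun _ : Fin 1 => a) n x) atTop (𝓝 0) := by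
      rw [MeasureTheory.ae_all_iff]
      intro a
      by_cases ha : a ∈ bigA A
      · filter_upwards [letter_freq_zero μ hErg ha] with x hx
        exact fun _ => hx
      · exact Filter.Eventually.of_forall (fun x h => absurd h ha)
    filter_upwards [hall] with x hx
    have hsum : Tendsto (fun n => ∑ a ∈ big, freqWord (fun _ : Fin 1 => a) n x) atTop
        (𝓝 (∑ a ∈ big, (0:ℝ))) :=
      tendsto_finset_sum big (fun a ha => hx a (by simpa [hbig] using ha))
    rw [Finset.sum_const, smul_zero] at hsum
    apply Tendsto.congr' _ hsum
    filter_upwards [eventually_ge_atTop 1] with n hn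
    exact (hid x n hn).symm
  -- domination
  have hbd : ∀ n, ∀ᵐ x ∂μ, ‖F n x‖ ≤ (1:ℝ) := by
    intro n
    apply Filter.Eventually.of_forall
    intro x
    rcases Nat.eq_zero_or_pos n with h | h
    · simp [hF, h]
    · rw [Real.norm_eq_abs, abs_le]
      constructor
      · apply le_trans (by norm_num : (-1:ℝ) ≤ 0)
        apply div_nonneg _ (Nat.cast_nonneg n)
        apply Finset.sum_nonneg
        intro i _
        by_cases hh : x i ∈ bigA A <;> simp [hh]
      · rw [div_le_one (by exact_mod_cast h)]
        calc ∑ i ∈ Finset.range n, (if x i ∈ bigA A then (1:ℝ) else 0)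
            ≤ ∑ i ∈ Finset.range n, (1:ℝ) := by
              apply Finset.sum_le_sum
              intro i _
              by_cases hh : x i ∈ bigA A <;> simp [hh]
          _ = (n : ℝ) := by simp
  -- integrals are constant = p
  have hint : ∀ n, 1 ≤ n → ∫ x, F n x ∂μ = p := by
    intro n hn
    have hterm : ∀ i : ℕ, ∫ x, (if x i ∈ bigA A then (1:ℝ) else 0) ∂μ = p := by
      intro i
      have hie : (fun x : ℕ → A => if x i ∈ bigA A then (1:ℝ) else 0)
          = fun x => ({y : ℕ → A | y i ∈ bigA A}).indicator (fun _ => (1:ℝ)) x := by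
        funext x
        rw [Set.indicator_apply]
        rfl
      have hm : MeasurableSet {y : ℕ → A | y i ∈ bigA A} :=
        (measurable_pi_apply i) measurableSet_bigA
      rw [hie, integral_indicator_const (1:ℝ) hm, measureReal_def, coord_bigA_measure μ hstat i]
      simp [hp, hE0]
    rw [hF]
    simp only
    rw [integral_div]
    rw [MeasureTheory.integral_finset_sum]
    · rw [Finset.sum_congr rfl (fun i _ => hterm i), Finset.sum_const, Finset.card_range,
        nsmul_eq_mul]
      rw [mul_comm, mul_div_assoc, div_self ((Nat.cast_pos.mpr hn).ne' : (n:ℝ) ≠ 0), mul_one]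
    · intro i _
      have : (fun x : ℕ → A => if x i ∈ bigA A then (1:ℝ) else 0)
          = fun x => ({y : ℕ → A | y i ∈ bigA A}).indicator (fun _ => (1:ℝ)) x := by
        funext x; rw [Set.indicator_apply]; rfl
      rw [this]
      exact (integrable_const (1:ℝ)).indicator ((measurable_pi_apply i) measurableSet_bigA)
  -- conclusion by dominated convergence
  have hdct : Tendsto (fun n => ∫ x, F n x ∂μ) atTop (𝓝 (∫ _x, (0:ℝ) ∂μ)) :=
    tendsto_integral_of_dominated_convergence (fun _ => (1:ℝ))
      (fun n => (hFm n).aestronglyMeasurable) (integrable_const 1) hbd hae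
  rw [integral_zero] at hdct
  have hconst : Tendsto (fun _n : ℕ => p) atTop (𝓝 0) := by
    apply Tendsto.congr' _ hdct
    filter_upwards [eventually_ge_atTop 1] with n hn
    exact hint n hn
  exact tendsto_nhds_unique tendsto_const_nhds hconst

/-- Atom-level cylinder. -/
def AtomD {n : ℕ} (B : Fin n → A) : Set (ℕ → A) := {x | ∀ i : Fin n, x i ∈ atomA (B i)}

/-- The set of sequences whose first `n` letters all have trivial atoms. -/
def goodSet (A : Type*) [Fintype A] [MeasurableSpace A] (n : ℕ) : Set (ℕ → A) :=
  {x : ℕ → A | ∀ i, i < n → x i ∉ bigA A}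

lemma measurableSet_AtomD {n : ℕ} (B : Fin n → A) : MeasurableSet (AtomD B) := by
  have : AtomD B = ⋂ i : Fin n, (fun x : ℕ → A => x ↑i) ⁻¹' atomA (B i) := by
    ext x; simp [AtomD]
  rw [this]
  exact MeasurableSet.iInter fun i => (measurable_pi_apply (↑i : ℕ)) (measurableSet_atomA (B i))

lemma measurableSet_goodSet (n : ℕ) : MeasurableSet (goodSet A n) := by
  have : goodSet A n = ⋂ (i : ℕ) (_ : i < n), (fun x : ℕ → A => x i) ⁻¹' (bigA A)ᶜ := by
    ext x; simp [goodSet]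
  rw [this]
  exact MeasurableSet.iInter fun i => MeasurableSet.iInter fun _ =>
    (measurable_pi_apply i) measurableSet_bigA.compl

/-- The outer measure of a word cylinder equals the measure of its atom cylinder. -/
lemma measure_wordCyl_eq_atomD (ν : Measure (ℕ → A)) {n : ℕ} (B : Fin n → A) :
    ν (wordCyl B) = ν (AtomD B) := by
  apply le_antisymm
  · apply measure_mono
    intro x hx i
    rw [hx i]
    exact mem_atomA_self (B i)
  · rw [measure_eq_iInf (wordCyl B)]
    refine le_iInf fun t => le_iInf fun hsub => le_iInf fun ht => measure_mono ?_
    intro y hy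
    classical
    set x : ℕ → A := fun j => if h : j < n then B ⟨j, h⟩ else y j with hxdef
    have hx : x ∈ wordCyl B := by
      intro i
      simp only [hxdef, i.isLt, dif_pos, Fin.eta]
    have hrel : ∀ (j : ℕ) (t' : Set A), MeasurableSet t' → (x j ∈ t' ↔ y j ∈ t') := by
      intro j t' ht'
      by_cases h : j < n
      · have hx' : x j = B ⟨j, h⟩ := by simp [hxdef, h]
        have hy' : y j ∈ atomA (B ⟨j, h⟩) := hy ⟨j, h⟩
        rw [hx']
        exact (mem_of_mem_atomA hy' ht').symm
      · have : x j = y j := by simp [hxdef, h]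
        rw [this]
    exact (mem_iff_of_indist hrel ht).mp (hsub hx)

lemma wordCyl_inter_good {n : ℕ} (B : Fin n → A) :
    wordCyl B ∩ goodSet A n = AtomD B ∩ goodSet A n := by
  ext x
  constructor
  · rintro ⟨hx, hg⟩
    refine ⟨fun i => ?_, hg⟩
    rw [hx i]; exact mem_atomA_self (B i)
  · rintro ⟨hx, hg⟩
    refine ⟨fun i => ?_, hg⟩
    have h1 : x ↑i ∈ atomA (B i) := hx i
    have h2 : atomA (x ↑i) ⊆ {x ↑i} := by
      by_contra hcon
      exact hg ↑i i.isLt hcon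
    have h3 : atomA (x ↑i) = atomA (B i) := atomA_eq_of_mem h1
    have h4 : B i ∈ atomA (x ↑i) := h3 ▸ mem_atomA_self (B i)
    have := h2 h4
    simp only [Set.mem_singleton_iff] at this
    exact this.symm

lemma measure_inter_good (ν : Measure (ℕ → A)) {n : ℕ} (hg : ν (goodSet A n)ᶜ = 0)
    (s : Set (ℕ → A)) : ν (s ∩ goodSet A n) = ν s := by
  apply le_antisymm (measure_mono Set.inter_subset_left)
  calc ν s ≤ ν ((s ∩ goodSet A n) ∪ (goodSet A n)ᶜ) := by
        apply measure_mono
        intro x hx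
        by_cases h : x ∈ goodSet A n
        · exact Or.inl ⟨hx, h⟩
        · exact Or.inr h
    _ ≤ ν (s ∩ goodSet A n) + ν (goodSet A n)ᶜ := measure_union_le _ _
    _ = ν (s ∩ goodSet A n) := by rw [hg, add_zero]

open Classical in
/-- Decomposition of a finite-horizon measurable set into word cylinders. -/
lemma measure_eq_sum_wordCyl (ν : Measure (ℕ → A)) {n : ℕ} (hg : ν (goodSet A n)ᶜ = 0)
    {s : Set (ℕ → A)} (hs : MeasurableSet s)
    (hdep : ∀ x y : ℕ → A, (∀ i, i < n → x i = y i) → x ∈ s → y ∈ s) :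
    ν s = ∑ B ∈ Finset.univ.filter (fun B : Fin n → A => wordCyl B ⊆ s), ν (wordCyl B) := by
  classical
  set T := Finset.univ.filter (fun B : Fin n → A => wordCyl B ⊆ s) with hT
  have key : s ∩ goodSet A n = ⋃ B ∈ T, (wordCyl B ∩ goodSet A n) := by
    ext x
    constructor
    · rintro ⟨hx, hgx⟩
      set B : Fin n → A := fun i => x ↑i with hB
      have hBT : B ∈ T := by
        rw [hT, Finset.mem_filter]
        refine ⟨Finset.mem_univ _, fun y hy => ?_⟩
        apply hdep x y _ hx
        intro i hi
        exact (hy ⟨i, hi⟩).symm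
      exact Set.mem_biUnion hBT ⟨fun i => rfl, hgx⟩
    · intro hx
      obtain ⟨B, hBT, hxB⟩ := Set.mem_iUnion₂.mp hx
      rw [hT, Finset.mem_filter] at hBT
      exact ⟨hBT.2 hxB.1, hxB.2⟩
  have hdisj : (T : Set (Fin n → A)).PairwiseDisjoint
      (fun B => wordCyl B ∩ goodSet A n) := by
    intro B _ B' _ hne
    rw [Function.onFun, Set.disjoint_left]
    rintro x ⟨hx1, _⟩ ⟨hx2, _⟩
    exact hne (funext fun i => (hx1 i).symm.trans (hx2 i))
  have hmeas : ∀ B ∈ T, MeasurableSet (wordCyl B ∩ goodSet A n) := by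
    intro B _
    rw [wordCyl_inter_good]
    exact (measurableSet_AtomD B).inter (measurableSet_goodSet n)
  calc ν s = ν (s ∩ goodSet A n) := (measure_inter_good ν hg s).symm
    _ = ∑ B ∈ T, ν (wordCyl B ∩ goodSet A n) := by rw [key, measure_biUnion_finset hdisj hmeas]
    _ = ∑ B ∈ T, ν (wordCyl B) := Finset.sum_congr rfl fun B _ => measure_inter_good ν hg _

open Classical in
lemma sum_wordCyl_toReal (ν : Measure (ℕ → A)) [IsProbabilityMeasure ν] {n : ℕ}
    (hg : ν (goodSet A n)ᶜ = 0) {s : Set (ℕ → A)} (hs : MeasurableSet s)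
    (hdep : ∀ x y : ℕ → A, (∀ i, i < n → x i = y i) → x ∈ s → y ∈ s) :
    (ν s).toReal = ∑ B ∈ Finset.univ.filter (fun B : Fin n → A => wordCyl B ⊆ s),
      (ν (wordCyl B)).toReal := by
  rw [measure_eq_sum_wordCyl ν hg hs hdep,
    ENNReal.toReal_sum (fun B _ => measure_ne_top ν (wordCyl B))]

lemma sum_wordCyl_univ (ν : Measure (ℕ → A)) [IsProbabilityMeasure ν] {n : ℕ}
    (hg : ν (goodSet A n)ᶜ = 0) :
    ∑ B : Fin n → A, (ν (wordCyl B)).toReal = 1 := by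
  classical
  have h := sum_wordCyl_toReal ν hg MeasurableSet.univ
    (fun x y _ _ => Set.mem_univ y)
  rw [Finset.filter_true_of_mem (fun B _ => Set.subset_univ _)] at h
  rw [← h, measure_univ, ENNReal.toReal_one]

open Classical in
/-- Total-variation style bound for finite-horizon sets. -/
lemma tv_bound (ν₁ ν₂ : Measure (ℕ → A)) [IsProbabilityMeasure ν₁] [IsProbabilityMeasure ν₂]
    {n : ℕ} (hg₁ : ν₁ (goodSet A n)ᶜ = 0) (hg₂ : ν₂ (goodSet A n)ᶜ = 0)
    {s : Set (ℕ → A)} (hs : MeasurableSet s)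
    (hdep : ∀ x y : ℕ → A, (∀ i, i < n → x i = y i) → x ∈ s → y ∈ s) :
    (ν₁ s).toReal ≤ (ν₂ s).toReal
      + ∑ B : Fin n → A, |(ν₁ (wordCyl B)).toReal - (ν₂ (wordCyl B)).toReal| := by
  classical
  set T := Finset.univ.filter (fun B : Fin n → A => wordCyl B ⊆ s) with hT
  rw [sum_wordCyl_toReal ν₁ hg₁ hs hdep, sum_wordCyl_toReal ν₂ hg₂ hs hdep]
  calc ∑ B ∈ T, (ν₁ (wordCyl B)).toReal
      ≤ ∑ B ∈ T, ((ν₂ (wordCyl B)).toReal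
          + |(ν₁ (wordCyl B)).toReal - (ν₂ (wordCyl B)).toReal|) := by
        apply Finset.sum_le_sum
        intro B _
        have := abs_sub_abs_le_abs_sub ((ν₁ (wordCyl B)).toReal) ((ν₂ (wordCyl B)).toReal)
        have h1 : (ν₁ (wordCyl B)).toReal - (ν₂ (wordCyl B)).toReal
            ≤ |(ν₁ (wordCyl B)).toReal - (ν₂ (wordCyl B)).toReal| := le_abs_self _
        linarith
    _ = ∑ B ∈ T, (ν₂ (wordCyl B)).toReal
        + ∑ B ∈ T, |(ν₁ (wordCyl B)).toReal - (ν₂ (wordCyl B)).toReal| :=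
        Finset.sum_add_distrib
    _ ≤ ∑ B ∈ T, (ν₂ (wordCyl B)).toReal
        + ∑ B : Fin n → A, |(ν₁ (wordCyl B)).toReal - (ν₂ (wordCyl B)).toReal| := by
        apply add_le_add_right
        apply Finset.sum_le_sum_of_subset_of_nonneg (Finset.subset_univ T)
        intro B _ _
        exact abs_nonneg _

lemma wt_pos (k : ℕ) : 0 < wt k := by
  unfold wt; positivity

lemma summable_wt : Summable wt := by
  have h2 : Summable (fun n : ℕ => 1 / (n : ℝ) ^ 2) :=
    Real.summable_one_div_nat_pow.mpr one_lt_two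
  have h3 : Summable (fun k : ℕ => 1 / ((k : ℝ) + 1) ^ 2) := by
    have := h2.comp_injective Nat.succ_injective
    convert this using 2 with k
    · rfl
    simp [Function.comp, Nat.succ_eq_add_one]
  apply Summable.of_nonneg_of_le (fun k => (wt_pos k).le) _ h3
  intro k
  unfold wt
  rw [div_le_div_iff₀ (by positivity) (by positivity)]
  nlinarith [Nat.cast_nonneg (α := ℝ) k]

lemma dd_term_le (ρ μ : Measure (ℕ → A)) [IsProbabilityMeasure ρ] [IsProbabilityMeasure μ]
    (hgρ : ∀ n, ρ (goodSet A n)ᶜ = 0) (hgμ : ∀ n, μ (goodSet A n)ᶜ = 0) (k : ℕ) :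
    wt k * ∑ B : Fin (k + 1) → A, |(ρ (wordCyl B)).toReal - (μ (wordCyl B)).toReal|
      ≤ dd ρ μ := by
  have hterm_nonneg : ∀ j : ℕ, 0 ≤ wt j * ∑ B : Fin (j + 1) → A,
      |(ρ (wordCyl B)).toReal - (μ (wordCyl B)).toReal| := by
    intro j
    exact mul_nonneg (wt_pos j).le (Finset.sum_nonneg fun B _ => abs_nonneg _)
  have hterm_le : ∀ j : ℕ, wt j * ∑ B : Fin (j + 1) → A,
      |(ρ (wordCyl B)).toReal - (μ (wordCyl B)).toReal| ≤ 2 * wt j := by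
    intro j
    have hS : ∑ B : Fin (j + 1) → A, |(ρ (wordCyl B)).toReal - (μ (wordCyl B)).toReal| ≤ 2 := by
      calc ∑ B : Fin (j + 1) → A, |(ρ (wordCyl B)).toReal - (μ (wordCyl B)).toReal|
          ≤ ∑ B : Fin (j + 1) → A, ((ρ (wordCyl B)).toReal + (μ (wordCyl B)).toReal) := by
            apply Finset.sum_le_sum
            intro B _
            calc |(ρ (wordCyl B)).toReal - (μ (wordCyl B)).toReal|
                ≤ |(ρ (wordCyl B)).toReal| + |(μ (wordCyl B)).toReal| := abs_sub _ _
              _ = (ρ (wordCyl B)).toReal + (μ (wordCyl B)).toReal := by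
                  rw [abs_of_nonneg ENNReal.toReal_nonneg, abs_of_nonneg ENNReal.toReal_nonneg]
        _ = 2 := by
            rw [Finset.sum_add_distrib, sum_wordCyl_univ ρ (hgρ (j+1)),
              sum_wordCyl_univ μ (hgμ (j+1))]
            norm_num
    calc wt j * ∑ B : Fin (j + 1) → A, |(ρ (wordCyl B)).toReal - (μ (wordCyl B)).toReal|
        ≤ wt j * 2 := by
          apply mul_le_mul_of_nonneg_left hS (wt_pos j).le
      _ = 2 * wt j := mul_comm _ _
  have hsum : Summable (fun j : ℕ => wt j * ∑ B : Fin (j + 1) → A,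
      |(ρ (wordCyl B)).toReal - (μ (wordCyl B)).toReal|) :=
    Summable.of_nonneg_of_le hterm_nonneg hterm_le (summable_wt.mul_left 2)
  exact Summable.le_tsum hsum k (fun j _ => hterm_nonneg j)

/-- If the letter events are null at every coordinate, the good sets are co-null. -/
lemma good_compl_null (ν : Measure (ℕ → A))
    (h : ∀ i : ℕ, ν {x : ℕ → A | x i ∈ bigA A} = 0) (n : ℕ) :
    ν (goodSet A n)ᶜ = 0 := by
  have hsub : (goodSet A n)ᶜ ⊆ ⋃ i : Fin n, {x : ℕ → A | x ↑i ∈ bigA A} := by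
    intro x hx
    simp only [goodSet, Set.mem_compl_iff, Set.mem_setOf_eq, not_forall] at hx
    obtain ⟨i, hi, hxi⟩ := hx
    rw [not_not] at hxi
    exact Set.mem_iUnion.mpr ⟨⟨i, hi⟩, hxi⟩
  apply measure_mono_null hsub
  exact measure_iUnion_null fun i => h ↑i

lemma erg_good_null (μ : Measure (ℕ → A)) (hμ : μ ∈ ergSet A) (n : ℕ) :
    μ (goodSet A n)ᶜ = 0 := by
  obtain ⟨hp, hs, he⟩ := hμ
  haveI := hp
  apply good_compl_null
  intro i
  rw [coord_bigA_measure μ hs i]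
  exact bigA_null μ hs he

/-- asymmetric testing, necessity. If there exists an asymmetrically
consistent test for `H₀` against `H₁`, then `W_ρ(H₁) = 0` for every `ρ ∈ cl(H₀)`. -/
theorem asymmetric_test_necessity (H₀ H₁ : Set (Measure (ℕ → A)))
    (hsub₀ : H₀ ⊆ ergSet A) (hsub₁ : H₁ ⊆ ergSet A)
    (hmeas₀ : MeasurableSet H₀) (hmeas₁ : MeasurableSet H₁)
    (hex : ∃ ψ : ℝ → ℕ → (ℕ → A) → Bool,
      (∀ α n, Measurable (ψ α n)) ∧ (∀ α, FinHorizon (ψ α)) ∧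
      AsymConsistent ψ H₀ H₁) :
    ∀ ρ ∈ closureD H₀, ∀ W, IsErgodicDecomp ρ W → W H₁ = 0 := by
  obtain ⟨ψ, hψm, hψhor, hI, hII⟩ := hex
  intro ρ hρ W hW
  obtain ⟨hρprob, hρstat, hρclose⟩ := hρ
  obtain ⟨hWprob, hWerg, hWdec⟩ := hW
  haveI := hρprob
  haveI := hWprob
  -- the good sets are co-null under ρ
  have hgρ : ∀ n, ρ (goodSet A n)ᶜ = 0 := by
    apply good_compl_null
    intro i
    have hm : MeasurableSet {x : ℕ → A | x i ∈ bigA A} :=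
      (measurable_pi_apply i) measurableSet_bigA
    rw [hWdec _ hm]
    have hf : Measurable (fun μ' : Measure (ℕ → A) => μ' {x : ℕ → A | x i ∈ bigA A}) :=
      Measure.measurable_coe hm
    rw [lintegral_eq_zero_iff hf]
    -- the integrand vanishes W-a.e.
    have hzm : MeasurableSet {μ' : Measure (ℕ → A) | μ' {x : ℕ → A | x i ∈ bigA A} = 0} :=
      hf (measurableSet_singleton 0)
    have hone : W {μ' : Measure (ℕ → A) | μ' {x : ℕ → A | x i ∈ bigA A} = 0} = 1 := by
      apply le_antisymm prob_le_one
      rw [← hWerg]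
      apply measure_mono
      intro μ' hμ'
      obtain ⟨hp, hs, he⟩ := hμ'
      haveI := hp
      show μ' {x : ℕ → A | x i ∈ bigA A} = 0
      rw [coord_bigA_measure μ' hs i]
      exact bigA_null μ' hs he
    have hnull : W {μ' : Measure (ℕ → A) | μ' {x : ℕ → A | x i ∈ bigA A} = 0}ᶜ = 0 := by
      rw [measure_compl hzm (measure_ne_top W _), hone, measure_univ, tsub_self]
    have hae0 : ∀ᵐ μ' ∂W, μ' {x : ℕ → A | x i ∈ bigA A} = 0 := by
      rw [MeasureTheory.ae_iff]
      exact hnull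
    filter_upwards [hae0] with μ' h
    simpa using h
  -- key: W H₁ ≤ ofReal α for every α ∈ (0,1)
  have hkey : ∀ α : ℝ, α ∈ Set.Ioo (0:ℝ) 1 → W H₁ ≤ ENNReal.ofReal α := by
    intro α hα
    set s : ℕ → Set (ℕ → A) := fun n => {x | ψ α n x = true} with hsdef
    have hsm : ∀ n, MeasurableSet (s n) := by
      intro n
      have : s n = (ψ α n) ⁻¹' {true} := rfl
      rw [this]
      exact (hψm α n) (measurableSet_singleton true)
    -- Step B : upper bound on ρ (s n)
    have hB : ∀ k : ℕ, ρ (s (k + 1)) ≤ ENNReal.ofReal α := by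
      intro k
      have htv : ∀ ε : ℝ, 0 < ε → (ρ (s (k + 1))).toReal ≤ α + ε := by
        intro ε hε
        obtain ⟨μ, hμ₀, hdd⟩ := hρclose (ε * wt k) (mul_pos hε (wt_pos k))
        obtain ⟨hμprob, hμstat, hμerg⟩ := hsub₀ hμ₀
        haveI := hμprob
        have hgμ : ∀ m, μ (goodSet A m)ᶜ = 0 := erg_good_null μ (hsub₀ hμ₀)
        have hterm := dd_term_le ρ μ hgρ hgμ k
        have hS : ∑ B : Fin (k + 1) → A, |(ρ (wordCyl B)).toReal - (μ (wordCyl B)).toReal|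
            < ε := by
          have h2 := lt_of_le_of_lt hterm hdd
          have h3 := wt_pos k
          nlinarith
        have hdep : ∀ x y : ℕ → A, (∀ i, i < k + 1 → x i = y i) →
            x ∈ s (k + 1) → y ∈ s (k + 1) := by
          intro x y hagree hx
          have := hψhor α (k + 1) x y hagree
          simp only [hsdef, Set.mem_setOf_eq] at hx ⊢
          rw [← this]
          exact hx
        have htvb := tv_bound ρ μ (hgρ (k + 1)) (hgμ (k + 1)) (hsm (k + 1)) hdep
        have hμs : (μ (s (k + 1))).toReal ≤ α := by
          have h4 := hI α hα (k + 1) μ hμ₀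
          have h5 : (μ (s (k+1))).toReal ≤ (ENNReal.ofReal α).toReal :=
            ENNReal.toReal_mono ENNReal.ofReal_ne_top h4
          rwa [ENNReal.toReal_ofReal hα.1.le] at h5
        linarith
      have h6 : (ρ (s (k + 1))).toReal ≤ α := le_of_forall_pos_le_add htv
      calc ρ (s (k + 1)) = ENNReal.ofReal (ρ (s (k + 1))).toReal :=
            (ENNReal.ofReal_toReal (measure_ne_top ρ _)).symm
        _ ≤ ENNReal.ofReal α := ENNReal.ofReal_le_ofReal h6
    -- Step A : W H₁ ≤ liminf ρ(s n)
    have hA : W H₁ ≤ liminf (fun n => ρ (s n)) atTop := by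
      have hpt : ∀ μ' : Measure (ℕ → A), H₁.indicator (fun _ => (1:ENNReal)) μ'
          ≤ liminf (fun n => μ' (s n)) atTop := by
        intro μ'
        by_cases hμ' : μ' ∈ H₁
        · rw [Set.indicator_of_mem hμ']
          obtain ⟨hμp, hμs, hμe⟩ := hsub₁ hμ'
          haveI := hμp
          have hae := hII α hα μ' hμ'
          set E : ℕ → Set (ℕ → A) := fun m => ⋂ (j : ℕ) (_ : m ≤ j), s j with hE
          have hEm : ∀ m, MeasurableSet (E m) := fun m =>
            MeasurableSet.iInter fun j => MeasurableSet.iInter fun _ => hsm j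
          have hEmono : Monotone E := by
            intro m m' hmm x hx
            simp only [hE, Set.mem_iInter] at hx ⊢
            intro j hj
            exact hx j (le_trans hmm hj)
          have hEuniv : μ' (⋃ m, E m) = 1 := by
            have hmem : ∀ᵐ x ∂μ', x ∈ ⋃ m, E m := by
              filter_upwards [hae] with x hx
              rw [Filter.eventually_atTop] at hx
              obtain ⟨m, hm⟩ := hx
              exact Set.mem_iUnion.mpr ⟨m, Set.mem_iInter.mpr fun j =>
                Set.mem_iInter.mpr fun hj => hm j hj⟩
            have h9 : (⋃ m, E m) =ᵐ[μ'] (Set.univ : Set (ℕ → A)) :=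
              Filter.eventuallyEq_univ.mpr hmem
            rw [measure_congr h9, measure_univ]
          have htend : Tendsto (fun m => μ' (E m)) atTop (𝓝 1) := by
            have := tendsto_measure_iUnion_atTop (μ := μ') hEmono
            rwa [hEuniv] at this
          have h1 : (1:ENNReal) = liminf (fun m => μ' (E m)) atTop := htend.liminf_eq.symm
          rw [h1]
          refine Filter.liminf_le_liminf ?_ (by isBoundedDefault) (by isBoundedDefault)
          apply Filter.Eventually.of_forall
          intro m
          apply measure_mono
          intro x hx
          simp only [hE, Set.mem_iInter] at hx
          exact hx m le_rfl
        · rw [Set.indicator_of_notMem hμ']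
          exact zero_le
      calc W H₁ = ∫⁻ μ', H₁.indicator (fun _ => (1:ENNReal)) μ' ∂W := by
            rw [lintegral_indicator hmeas₁, setLIntegral_one]
        _ ≤ ∫⁻ μ', liminf (fun n => μ' (s n)) atTop ∂W := lintegral_mono hpt
        _ ≤ liminf (fun n => ∫⁻ μ', μ' (s n) ∂W) atTop :=
            lintegral_liminf_le fun n => Measure.measurable_coe (hsm n)
        _ = liminf (fun n => ρ (s n)) atTop := by
            congr 1
            funext n
            exact (hWdec _ (hsm n)).symm
    -- combine
    have hlim : liminf (fun n => ρ (s n)) atTop ≤ ENNReal.ofReal α := by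
      have hev : ∀ᶠ n in atTop, ρ (s n) ≤ ENNReal.ofReal α := by
        filter_upwards [eventually_ge_atTop 1] with n hn
        obtain ⟨k, rfl⟩ : ∃ k, n = k + 1 := ⟨n - 1, (Nat.succ_pred_eq_of_pos hn).symm⟩
        exact hB k
      calc liminf (fun n => ρ (s n)) atTop
          ≤ liminf (fun _n : ℕ => ENNReal.ofReal α) atTop :=
            Filter.liminf_le_liminf hev (by isBoundedDefault) (by isBoundedDefault)
        _ = ENNReal.ofReal α := Filter.liminf_const _
    exact le_trans hA hlim
  -- conclude : W H₁ = 0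
  by_contra hne
  have hc1 : W H₁ ≤ 1 := prob_le_one
  have hcT : W H₁ ≠ ⊤ := measure_ne_top W H₁
  have hpos : 0 < (W H₁).toReal := ENNReal.toReal_pos hne hcT
  have hto1 : (W H₁).toReal ≤ 1 := by
    calc (W H₁).toReal ≤ (1:ENNReal).toReal := ENNReal.toReal_mono (by norm_num) hc1
      _ = 1 := by norm_num
  have hαmem : (W H₁).toReal / 2 ∈ Set.Ioo (0:ℝ) 1 := by
    constructor
    · linarith
    · linarith
  have h7 := hkey _ hαmem
  have h8 : ENNReal.ofReal ((W H₁).toReal / 2) < W H₁ := by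
    rw [ENNReal.ofReal_lt_iff_lt_toReal (by linarith) hcT]
    linarith
  exact absurd (lt_of_le_of_lt h7 h8) (lt_irrefl _)

end Paper
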